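/- Let L, R be 2×2 complex matrices satisfying RL = L and R² = R + L − LR. If LR ≠ RL, then L is conjugate (by a change of basis that preserves the pair of relations) to the matrix diag(a, 0) for some a ≠ 0; in particular det L = 0 and L has a nonzero eigenvalue. -/

import Mathlib

open Matrix

/-- Cayley–Hamilton for 2×2 matrices. -/
lemma ch2_aux (A : Matrix (Fin 2) (Fin 2) ℂ) : A * A = A.trace • A - A.det • 1 := by
  ext i j
  fin_cases i <;> fin_cases j <;>
    simp [Matrix.mul_apply, Matrix.trace, Matrix.diag, Fin.sum_univ_two, Matrix.one_apply,
      Matrix.det_fin_two] <;> ring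

/-- Anticommutator identity for 2×2 matrices. -/
lemma anti2_aux (A B : Matrix (Fin 2) (Fin 2) ℂ) :
    A * B + B * A = A.trace • B + B.trace • A + ((A * B).trace - A.trace * B.trace) • 1 := by
  ext i j
  fin_cases i <;> fin_cases j <;>
    simp [Matrix.mul_apply, Matrix.trace, Matrix.diag, Fin.sum_univ_two, Matrix.one_apply] <;> ring

lemma aux_diag (L : Matrix (Fin 2) (Fin 2) ℂ) (t v0 v1 u0 u1 : ℂ) (ht : t ≠ 0)
    (hv0 : L 0 0 * v0 + L 0 1 * v1 = t * v0)
    (hv1 : L 1 0 * v0 + L 1 1 * v1 = t * v1)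
    (hu0 : L 0 0 * u0 + L 0 1 * u1 = 0)
    (hu1 : L 1 0 * u0 + L 1 1 * u1 = 0)
    (hP : v0 * u1 - v1 * u0 ≠ 0) :
    (∃ (P : Matrix (Fin 2) (Fin 2) ℂ) (a : ℂ), IsUnit P ∧ a ≠ 0 ∧
      P⁻¹ * L * P = Matrix.diagonal ![a, 0]) ∧
    (∃ a : ℂ, a ≠ 0 ∧ Module.End.HasEigenvalue (Matrix.toLin' L) a) := by
  set P : Matrix (Fin 2) (Fin 2) ℂ := Matrix.of ![![v0, u0], ![v1, u1]] with hPdef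
  have hPd : P.det = v0 * u1 - v1 * u0 := by
    simp [Matrix.det_fin_two, hPdef]; ring
  have hPu : IsUnit P.det := by rw [hPd]; exact isUnit_iff_ne_zero.mpr hP
  have key : L * P = P * Matrix.diagonal ![t, 0] := by
    ext i j
    fin_cases i <;> fin_cases j <;>
      simp [Matrix.mul_apply, Fin.sum_univ_two, hPdef, Matrix.diagonal]
    · linear_combination hv0
    · linear_combination hu0
    · linear_combination hv1
    · linear_combination hu1
  have hfin : P⁻¹ * L * P = Matrix.diagonal ![t, 0] := by
    rw [Matrix.mul_assoc, key, ← Matrix.mul_assoc, Matrix.nonsing_inv_mul P hPu, Matrix.one_mul]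
  refine ⟨⟨P, t, (Matrix.isUnit_iff_isUnit_det P).mpr hPu, ht, hfin⟩, ⟨t, ht, ?_⟩⟩
  have hvne : (![v0, v1] : Fin 2 → ℂ) ≠ 0 := by
    intro h
    apply hP
    have h0 : v0 = 0 := congrFun h 0
    have h1 : v1 = 0 := congrFun h 1
    rw [h0, h1]; ring
  apply Module.End.hasEigenvalue_of_hasEigenvector (x := ![v0, v1])
  constructor
  · rw [Module.End.mem_eigenspace_iff]
    ext i
    fin_cases i <;>
      simp [Matrix.toLin'_apply, Matrix.mulVec, dotProduct, Fin.sum_univ_two]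
    · linear_combination hv0
    · linear_combination hv1
  · exact hvne

/-- if 2×2 complex matrices satisfy `RL = L`,
`R² = R + L − LR` and `LR ≠ RL`, then `L` is conjugate to `diag(a,0)` with
`a ≠ 0`; in particular `det L = 0` and `L` has a nonzero eigenvalue. -/
theorem L_diagonal_form (L R : Matrix (Fin 2) (Fin 2) ℂ)
    (h1 : R * L = L) (h2 : R * R = R + L - L * R) (h3 : L * R ≠ R * L) :
    (∃ (P : Matrix (Fin 2) (Fin 2) ℂ) (a : ℂ), IsUnit P ∧ a ≠ 0 ∧
      P⁻¹ * L * P = Matrix.diagonal ![a, 0]) ∧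
    L.det = 0 ∧
    (∃ a : ℂ, a ≠ 0 ∧ Module.End.HasEigenvalue (Matrix.toLin' L) a) := by
  have hL0 : L ≠ 0 := by rintro rfl; exact h3 (by simp)
  -- the matrix S = R - 1 kills L from the left
  set S : Matrix (Fin 2) (Fin 2) ℂ := R - 1 with hSdef
  have hSL : S * L = 0 := by rw [hSdef, sub_mul, one_mul, h1, sub_self]
  -- det L = 0
  have hdet : L.det = 0 := by
    by_contra hd
    have hu : IsUnit L.det := isUnit_iff_ne_zero.mpr hd
    have hR1 : R = 1 := by
      have h := congrArg (· * L⁻¹) hSL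
      simp only [Matrix.mul_assoc, Matrix.mul_nonsing_inv L hu, Matrix.mul_one,
        Matrix.zero_mul] at h
      rw [hSdef] at h
      exact sub_eq_zero.mp h
    rw [hR1] at h3
    exact h3 (by rw [Matrix.one_mul, Matrix.mul_one])
  -- trace L ≠ 0
  have htr : L.trace ≠ 0 := by
    intro htr0
    -- L is nilpotent by Cayley-Hamilton
    have hL2 : L * L = 0 := by rw [ch2_aux L, htr0, hdet]; simp
    -- S² + S + LS = 0 (from h2)
    have hS2 : S * S + S + L * S = 0 := by
      have e : S * S + S + L * S = R * R - (R + L - L * R) := by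
        rw [hSdef]; noncomm_ring
      rw [e, h2, sub_self]
    -- anticommutator identity gives L*S = (tr S) • L + (tr (L*S)) • 1
    have hLS : L * S = S.trace • L + (L * S).trace • 1 := by
      have := anti2_aux L S
      rw [hSL, htr0] at this
      simpa using this
    -- trace of that equation forces tr (L*S) = 0
    have htau : (L * S).trace = 0 := by
      have h := congrArg Matrix.trace hLS
      rw [Matrix.trace_add, Matrix.trace_smul, Matrix.trace_smul, Matrix.trace_one, htr0] at h
      simp only [Fintype.card_fin, smul_eq_mul, mul_zero, zero_add, Nat.cast_ofNat] at h
      have : (L * S).trace * 2 - (L * S).trace = 0 := by rw [← h]; ring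
      linear_combination this
    have hLS' : L * S = S.trace • L := by rw [hLS, htau]; simp
    -- multiply hS2 by L on the left : (s² + s) • L = 0
    have hmul : (S.trace * S.trace + S.trace) • L = 0 := by
      have h := congrArg (L * ·) hS2
      simp only [Matrix.mul_add, Matrix.mul_zero] at h
      rw [← Matrix.mul_assoc, hLS', Matrix.smul_mul, hLS', mul_smul_comm, hL2, smul_zero,
        add_zero, smul_smul] at h
      rw [add_smul]
      exact h
    have hs : S.trace * S.trace + S.trace = 0 := by
      rcases smul_eq_zero.mp hmul with h | h
      · exact h
      · exact absurd h hL0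
    -- Cayley-Hamilton for S, combined with hS2
    have hdS : S.det = 0 := by
      have h := congrArg Matrix.trace hS2
      rw [ch2_aux S] at h
      simp only [Matrix.trace_add, Matrix.trace_sub, Matrix.trace_smul, Matrix.trace_one,
        hLS', Fintype.card_fin, smul_eq_mul, htr0, mul_zero, Matrix.trace_zero,
        Nat.cast_ofNat] at h
      have : S.det * 2 = S.trace * S.trace + S.trace := by linear_combination -h
      rw [hs] at this
      linear_combination this / 2
    have hkey : (S.trace + 1) • S + S.trace • L = 0 := by
      have h := hS2
      rw [ch2_aux S, hdS, hLS'] at h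
      simp only [zero_smul, sub_zero] at h
      rw [add_smul, one_smul]
      linear_combination (norm := module) h
    rcases mul_eq_zero.mp (by linear_combination hs : S.trace * (S.trace + 1) = 0) with h0 | h0
    · -- tr S = 0 : then S = 0, so R = 1, contradiction
      rw [h0] at hkey
      simp only [zero_add, one_smul, zero_smul, add_zero] at hkey
      have hR1 : R = 1 := by rw [hSdef] at hkey; exact sub_eq_zero.mp hkey
      rw [hR1] at h3
      exact h3 (by rw [Matrix.one_mul, Matrix.mul_one])
    · -- tr S = -1 : then L = 0, contradiction
      have hst : S.trace = -1 := by linear_combination h0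
      rw [hst] at hkey
      simp only [neg_add_cancel, zero_smul, zero_add, neg_smul, one_smul] at hkey
      exact hL0 (neg_eq_zero.mp hkey)
  -- now the construction
  rw [Matrix.det_fin_two] at hdet
  rw [Matrix.trace_fin_two] at htr
  set a := L 0 0
  set b := L 0 1
  set c := L 1 0
  set d := L 1 1
  refine ⟨?_, by rw [Matrix.det_fin_two]; exact hdet, ?_⟩ <;>
  · rcases eq_or_ne c 0 with hc | hc
    · rcases eq_or_ne a 0 with ha | ha
      · -- a = 0, c = 0, so t = d ≠ 0; v = (b,d), u = (1,0)
        have hd : d ≠ 0 := by intro h; apply htr; rw [ha, h, add_zero]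
        have := aux_diag L (a + d) b d 1 0 htr
          (by ring)
          (by linear_combination b * hc + (-d) * ha)
          (by linear_combination ha) (by linear_combination hc)
          (by simpa [ha] using neg_ne_zero.mpr hd)
        first
          | exact this.1
          | exact this.2
      · -- c = 0, a ≠ 0, then d = 0 (det) ; v = (a,0), u = (-b,a)
        have hd0 : d = 0 := by
          rcases mul_eq_zero.mp (by linear_combination hdet + hc * b : a * d = 0) with h | h
          · exact absurd h ha
          · exact h
        have := aux_diag L (a + d) a 0 (-b) a htr
          (by linear_combination (-a) * hd0) (by linear_combination a * hc)
          (by ring) (by linear_combination (-b) * hc + a * hd0)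
          (by simpa [hd0] using mul_ne_zero ha ha)
        first
          | exact this.1
          | exact this.2
    · -- c ≠ 0 ; v = (a,c), u = (-d,c)
      have := aux_diag L (a + d) a c (-d) c htr
        (by linear_combination -hdet) (by ring)
        (by linear_combination -hdet) (by ring)
        (by
          have : a * c - c * -d = c * (a + d) := by ring
          rw [this]
          exact mul_ne_zero hc htr)
      first
        | exact this.1
        | exact this.2
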